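/- Ordering of semantic relative entropies: D_s(p‖q_s) ≤ D_s(p_s‖q_s) ≤ D_s(p_s‖q), where D_s(p‖q_s) = ∑_i ∑_{u∈U_i} p(u) log(p(u)/P_q(U_i)) and D_s(p_s‖q) = ∑_i ∑_{u∈U_i} p(u) log(P_p(U_i)/q(u)). -/

import Mathlib

open Finset

/-- Probability of the block of index `i` under the partition induced by `blk`. -/
noncomputable def blockProb {U B : Type*} [Fintype U] [DecidableEq B]
    (p : U → ℝ) (blk : U → B) (i : B) : ℝ :=
  ∑ u : U, if blk u = i then p u else 0

/-- Full semantic relative entropy `D_s(p_s‖q_s)`. -/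
noncomputable def semRelEntropyFull {U B : Type*} [Fintype U] [Fintype B] [DecidableEq B]
    (p q : U → ℝ) (blk : U → B) : ℝ :=
  ∑ i : B, blockProb p blk i * Real.logb 2 (blockProb p blk i / blockProb q blk i)

/-- Partial semantic relative entropy `D_s(p_s‖q) = ∑_i ∑_{u∈U_i} p(u) log(P_p(U_i)/q(u))`. -/
noncomputable def semRelEntropyLeft {U B : Type*} [Fintype U] [Fintype B] [DecidableEq B]
    (p q : U → ℝ) (blk : U → B) : ℝ :=
  ∑ u : U, p u * Real.logb 2 (blockProb p blk (blk u) / q u)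

/-- Partial semantic relative entropy `D_s(p‖q_s) = ∑_i ∑_{u∈U_i} p(u) log(p(u)/P_q(U_i))`. -/
noncomputable def semRelEntropyRight {U B : Type*} [Fintype U] [Fintype B] [DecidableEq B]
    (p q : U → ℝ) (blk : U → B) : ℝ :=
  ∑ u : U, p u * Real.logb 2 (p u / blockProb q blk (blk u))

lemma le_blockProb {U B : Type*} [Fintype U] [DecidableEq B]
    (p : U → ℝ) (blk : U → B) (hp : ∀ u, 0 ≤ p u) (u : U) :
    p u ≤ blockProb p blk (blk u) := by
  have h := Finset.single_le_sum (f := fun v => if blk v = blk u then p v else 0)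
    (fun v _ => by split <;> simp [hp v]) (Finset.mem_univ u)
  simpa [blockProb] using h

lemma full_eq_sum {U B : Type*} [Fintype U] [Fintype B] [DecidableEq B]
    (p q : U → ℝ) (blk : U → B) :
    semRelEntropyFull p q blk =
      ∑ u : U, p u * Real.logb 2 (blockProb p blk (blk u) / blockProb q blk (blk u)) := by
  unfold semRelEntropyFull
  have : ∀ i : B, blockProb p blk i * Real.logb 2 (blockProb p blk i / blockProb q blk i)
      = ∑ u : U, (if blk u = i then
          p u * Real.logb 2 (blockProb p blk i / blockProb q blk i) else 0) := by
    intro i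
    rw [blockProb, Finset.sum_mul]
    exact Finset.sum_congr rfl (fun u _ => by split <;> simp)
  simp_rw [this]
  rw [Finset.sum_comm]
  refine Finset.sum_congr rfl (fun u _ => ?_)
  simp

/-- Ordering of semantic relative entropies: `D_s(p‖q_s) ≤ D_s(p_s‖q_s) ≤ D_s(p_s‖q)`. -/
theorem semRelEntropy_ordering {U B : Type*} [Fintype U] [Fintype B] [DecidableEq B]
    (p q : U → ℝ) (blk : U → B)
    (hp : ∀ u, 0 ≤ p u) (hpsum : ∑ u, p u = 1)
    (hq : ∀ u, 0 < q u) (hqsum : ∑ u, q u = 1) :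
    semRelEntropyRight p q blk ≤ semRelEntropyFull p q blk ∧
      semRelEntropyFull p q blk ≤ semRelEntropyLeft p q blk := by
  have hb : (1:ℝ) < 2 := one_lt_two
  have hqb : ∀ u, 0 < blockProb q blk (blk u) := fun u =>
    lt_of_lt_of_le (hq u) (le_blockProb q blk (fun v => (hq v).le) u)
  rw [full_eq_sum]
  constructor
  · refine Finset.sum_le_sum (fun u _ => ?_)
    rcases eq_or_lt_of_le (hp u) with h | h
    · simp [← h]
    · refine mul_le_mul_of_nonneg_left ?_ (hp u)
      exact Real.logb_le_logb_of_le hb (div_pos h (hqb u))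
        (div_le_div_of_nonneg_right (le_blockProb p blk hp u) (hqb u).le)
  · unfold semRelEntropyLeft
    refine Finset.sum_le_sum (fun u _ => ?_)
    rcases eq_or_lt_of_le (hp u) with h | h
    · simp [← h]
    · have hpp : 0 < blockProb p blk (blk u) := lt_of_lt_of_le h (le_blockProb p blk hp u)
      refine mul_le_mul_of_nonneg_left ?_ (hp u)
      exact Real.logb_le_logb_of_le hb (div_pos hpp (hqb u))
        (div_le_div_of_nonneg_left hpp.le (hq u) (le_blockProb q blk (fun v => (hq v).le) u))
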